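/- Let c ≥ 2 and let λ be any good edge-labeling of the c-color gadget D_c. Then λ(v v_i) ≠ λ(v v_j) for all i ≠ j ∈ [c]. In particular, D_c does not admit a (c−1)-gel. -/

import Mathlib

/-- A walk is *increasing* with respect to an edge-labeling if the sequence of labels of its
edges, traversed from the first endpoint to the last, is non-decreasing. -/
def IsIncreasing {V : Type*} (G : SimpleGraph V) (lab : Sym2 V → ℝ) {x y : V}
    (p : G.Walk x y) : Prop :=
  (p.edges.map lab).Chain' (· ≤ ·)

/-- An edge-labeling is *good* if for every ordered pair `(x, y)` of vertices there do not
exist two distinct increasing paths from `x` to `y`. -/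
def IsGoodLabeling {V : Type*} (G : SimpleGraph V) (lab : Sym2 V → ℝ) : Prop :=
  ∀ (x y : V) (p q : G.Walk x y), p.IsPath → q.IsPath →
    IsIncreasing G lab p → IsIncreasing G lab q → p = q

/-- The vertices of the `c`-color gadget: `Sum.inl ()` is the vertex `v`, `Sum.inr (Sum.inl i)`
is the vertex `v_i`, and `Sum.inr (Sum.inr p)` with `p.1 < p.2` is the vertex `v_{i,j}`. -/
def DVert (c : ℕ) : Type :=
  Unit ⊕ Fin c ⊕ {p : Fin c × Fin c // p.1 < p.2}

/-- The `c`-color gadget `D_c`, with edges `v v_i` for each `i`, and `v_i v_{i,j}`,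
`v_j v_{i,j}` for each `i < j`. -/
def DGadget (c : ℕ) : SimpleGraph (DVert c) :=
  SimpleGraph.fromRel (fun a b =>
    (∃ i : Fin c, a = Sum.inl () ∧ b = Sum.inr (Sum.inl i)) ∨
    (∃ (i : Fin c) (p : {p : Fin c × Fin c // p.1 < p.2}),
      a = Sum.inr (Sum.inl i) ∧ b = Sum.inr (Sum.inr p) ∧ (p.val.1 = i ∨ p.val.2 = i)))

instance (c : ℕ) : Finite (DVert c) := by unfold DVert; infer_instance

lemma adj_v_vi (c : ℕ) (i : Fin c) :
    (DGadget c).Adj (Sum.inl ()) (Sum.inr (Sum.inl i)) := by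
  exact SimpleGraph.fromRel_adj .. |>.mpr ⟨by intro hh; injection hh, Or.inl (Or.inl ⟨i, rfl, rfl⟩)⟩

lemma adj_vi_vij (c : ℕ) (i : Fin c) (p : {p : Fin c × Fin c // p.1 < p.2})
    (h : p.val.1 = i ∨ p.val.2 = i) :
    (DGadget c).Adj (Sum.inr (Sum.inl i)) (Sum.inr (Sum.inr p)) := by
  refine SimpleGraph.fromRel_adj .. |>.mpr ⟨?_, Or.inl (Or.inr ⟨i, p, rfl, rfl, h⟩)⟩
  intro hh
  injection hh with hh
  injection hh

lemma helper {V : Type*} {G : SimpleGraph V} {lab : Sym2 V → ℝ}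
    (hg : IsGoodLabeling G lab) {x y m1 m2 : V}
    (h1x : G.Adj x m1) (h1y : G.Adj m1 y) (h2x : G.Adj x m2) (h2y : G.Adj m2 y)
    (hm : m1 ≠ m2) (hxy : x ≠ y)
    (hlab : lab s(x, m1) = lab s(m1, y)) : False := by
  classical
  let p1 : G.Walk x y := .cons h1x (.cons h1y .nil)
  let p2 : G.Walk x y := .cons h2x (.cons h2y .nil)
  have hp1 : p1.IsPath := by
    simp [p1, SimpleGraph.Walk.isPath_def, hxy, h1x.ne, h1y.ne]
  have hp2 : p2.IsPath := by
    simp [p2, SimpleGraph.Walk.isPath_def, hxy, h2x.ne, h2y.ne]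
  have hi1 : IsIncreasing G lab p1 := by
    simp [IsIncreasing, p1, hlab, List.Chain', List.isChain_cons_cons]
  by_cases hle : lab s(x, m2) ≤ lab s(m2, y)
  · have hi2 : IsIncreasing G lab p2 := by
      simp [IsIncreasing, p2, List.Chain', List.isChain_cons_cons, hle]
    have := hg x y p1 p2 hp1 hp2 hi1 hi2
    have := congrArg SimpleGraph.Walk.support this
    simp [p1, p2, hm] at this
  · let q1 : G.Walk y x := .cons h1y.symm (.cons h1x.symm .nil)
    let q2 : G.Walk y x := .cons h2y.symm (.cons h2x.symm .nil)
    have hq1 : q1.IsPath := by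
      simp [q1, SimpleGraph.Walk.isPath_def, hxy.symm, h1x.ne', h1y.ne']
    have hq2 : q2.IsPath := by
      simp [q2, SimpleGraph.Walk.isPath_def, hxy.symm, h2x.ne', h2y.ne']
    have hj1 : IsIncreasing G lab q1 := by
      simp [IsIncreasing, q1, List.Chain', List.isChain_cons_cons, Sym2.eq_swap, hlab]
    have hj2 : IsIncreasing G lab q2 := by
      have : lab s(m2, y) ≤ lab s(x, m2) := le_of_not_ge hle
      simp only [IsIncreasing, q2, SimpleGraph.Walk.edges_cons,
        SimpleGraph.Walk.edges_nil, List.map_cons, List.map_nil, List.Chain', List.isChain_cons_cons,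
        List.isChain_singleton, and_true]
      rw [Sym2.eq_swap]
      nth_rewrite 2 [Sym2.eq_swap]
      exact this
    have := hg y x q1 q2 hq1 hq2 hj1 hj2
    have := congrArg SimpleGraph.Walk.support this
    simp [q1, q2, hm] at this

/-- Let `c ≥ 2`. For any good edge-labeling `lab` of `D_c`, the labels of the edges `v v_i`
are pairwise distinct. In particular, `D_c` does not admit a `(c-1)`-gel. -/
theorem color_gadget_distinct_labels (c : ℕ) (hc : 2 ≤ c) :
    (∀ lab : Sym2 (DVert c) → ℝ, IsGoodLabeling (DGadget c) lab →
      ∀ i j : Fin c, i ≠ j →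
        lab s((Sum.inl () : DVert c), Sum.inr (Sum.inl i)) ≠
          lab s((Sum.inl () : DVert c), Sum.inr (Sum.inl j))) ∧
    ¬ ∃ lab : Sym2 (DVert c) → ℝ,
        IsGoodLabeling (DGadget c) lab ∧ (lab '' (DGadget c).edgeSet).ncard ≤ c - 1 := by
  have main : ∀ lab : Sym2 (DVert c) → ℝ, IsGoodLabeling (DGadget c) lab →
      ∀ i j : Fin c, i ≠ j →
        lab s((Sum.inl () : DVert c), Sum.inr (Sum.inl i)) ≠
          lab s((Sum.inl () : DVert c), Sum.inr (Sum.inl j)) := by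
    intro lab hg i j hij heq
    rcases lt_or_gt_of_ne hij with h | h
    · refine helper hg (m1 := Sum.inl ()) (m2 := Sum.inr (Sum.inr ⟨(i, j), h⟩))
        (adj_v_vi c i).symm (adj_v_vi c j)
        (adj_vi_vij c i ⟨(i, j), h⟩ (Or.inl rfl))
        (adj_vi_vij c j ⟨(i, j), h⟩ (Or.inr rfl)).symm
        (by intro hh; injection hh) (by intro hh; injection hh with hh; injection hh with hh; exact hij hh) ?_
      exact (congrArg lab Sym2.eq_swap).trans heq
    · refine helper hg (m1 := Sum.inl ()) (m2 := Sum.inr (Sum.inr ⟨(j, i), h⟩))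
        (adj_v_vi c i).symm (adj_v_vi c j)
        (adj_vi_vij c i ⟨(j, i), h⟩ (Or.inr rfl))
        (adj_vi_vij c j ⟨(j, i), h⟩ (Or.inl rfl)).symm
        (by intro hh; injection hh) (by intro hh; injection hh with hh; injection hh with hh; exact hij hh) ?_
      exact (congrArg lab Sym2.eq_swap).trans heq
  refine ⟨main, ?_⟩
  rintro ⟨lab, hg, hcard⟩
  set f : Fin c → ℝ := fun i => lab s((Sum.inl () : DVert c), Sum.inr (Sum.inl i)) with hf
  have hinj : Function.Injective f := by
    intro i j h
    by_contra hij
    exact main lab hg i j hij h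
  have hsub : Set.range f ⊆ lab '' (DGadget c).edgeSet := by
    rintro _ ⟨i, rfl⟩
    exact ⟨_, (adj_v_vi c i), rfl⟩
  have hfin : (lab '' (DGadget c).edgeSet).Finite := Set.toFinite _
  have hle : (Set.range f).ncard ≤ (lab '' (DGadget c).edgeSet).ncard :=
    Set.ncard_le_ncard hsub hfin
  have hrange : (Set.range f).ncard = c := by
    rw [← Set.image_univ, Set.ncard_image_of_injective _ hinj, Set.ncard_univ]
    simp
  omega
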